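/- Let m ≥ 1, a > 1 a real number, and let γ = [[a·I_{2m}, C],[Cᵀ, a·I_{2m}]] be a real symmetric 4m×4m matrix with (γ · (σ_m ⊕ σ_m))² = −I_{4m}. Then: (i) σ_m Cᵀ σ_m = Cᵀ; (ii) C·Cᵀ = (a² − 1)·I_{2m}; (iii) C σ_m Cᵀ = −(a² − 1)·σ_m; and (iv) there exists a real 2m×2m matrix O which is both orthogonal (O Oᵀ = I) and symplectic (O σ_m Oᵀ = σ_m) such that C = √(a² − 1) · O · Λ̄, where Λ̄ := ⊕_{k=1}^m Λ. -/

import Mathlib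

open Matrix

/-- The standard symplectic form `σ_m = ⊕_{i=1}^m [[0,-1],[1,0]]` on `ℝ^{2m}`. -/
noncomputable def symp (m : ℕ) : Matrix (Fin (2 * m)) (Fin (2 * m)) ℝ :=
  Matrix.of fun i j =>
    if i.val = j.val + 1 ∧ i.val % 2 = 1 then 1
    else if j.val = i.val + 1 ∧ j.val % 2 = 1 then -1 else 0

/-- `σ_{2m} = σ_m ⊕ σ_m`. -/
noncomputable def sympBig (m : ℕ) :
    Matrix (Fin (2 * m) ⊕ Fin (2 * m)) (Fin (2 * m) ⊕ Fin (2 * m)) ℝ :=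
  Matrix.fromBlocks (symp m) 0 0 (symp m)

/-- `Λ̄ = ⊕_{k=1}^m Λ = diag(1,-1,…,1,-1)`. -/
noncomputable def lambdaBar (m : ℕ) : Matrix (Fin (2 * m)) (Fin (2 * m)) ℝ :=
  Matrix.diagonal fun i => if i.val % 2 = 0 then (1 : ℝ) else -1

namespace SympAux

def pair {m : ℕ} (i : Fin (2 * m)) : Fin (2 * m) :=
  ⟨if i.val % 2 = 0 then i.val + 1 else i.val - 1, by
    rcases i with ⟨v, hv⟩; dsimp only; split <;> omega⟩

lemma pair_val {m : ℕ} (i : Fin (2 * m)) :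
    (pair i).val = if i.val % 2 = 0 then i.val + 1 else i.val - 1 := rfl

lemma pair_val_even {m : ℕ} (i : Fin (2 * m)) (h : i.val % 2 = 0) :
    (pair i).val = i.val + 1 := by rw [pair_val, if_pos h]

lemma pair_val_odd {m : ℕ} (i : Fin (2 * m)) (h : i.val % 2 = 1) :
    (pair i).val = i.val - 1 := by rw [pair_val, if_neg (by omega)]

lemma pair_pair {m : ℕ} (i : Fin (2 * m)) : pair (pair i) = i := by
  apply Fin.ext
  rcases Nat.mod_two_eq_zero_or_one i.val with h | h
  · have h1 := pair_val_even i h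
    rw [pair_val, if_neg (by omega), h1]; omega
  · have h1 := pair_val_odd i h
    rw [pair_val, if_pos (by omega), h1]; omega

lemma pair_parity {m : ℕ} (i : Fin (2 * m)) : (pair i).val % 2 = 1 - i.val % 2 := by
  rcases Nat.mod_two_eq_zero_or_one i.val with h | h
  · rw [pair_val_even i h]; omega
  · rw [pair_val_odd i h]; omega

lemma symp_apply {m : ℕ} (i j : Fin (2 * m)) :
    symp m i j = if j = pair i then (if i.val % 2 = 0 then (-1:ℝ) else 1) else 0 := by
  rcases Nat.mod_two_eq_zero_or_one i.val with h | h
  · simp only [symp, Matrix.of_apply]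
    by_cases hj : (j : ℕ) = i.val + 1
    · have hpe : j = pair i := Fin.ext (by rw [pair_val_even i h]; exact hj)
      rw [if_neg (by omega), if_pos ⟨hj, by omega⟩, if_pos hpe, if_pos h]
    · have hpe : j ≠ pair i := fun hc => hj (by rw [hc, pair_val_even i h])
      rw [if_neg (by omega), if_neg (by tauto), if_neg hpe]
  · simp only [symp, Matrix.of_apply]
    by_cases hj : (i : ℕ) = j.val + 1
    · have hpe : j = pair i := Fin.ext (by rw [pair_val_odd i h]; omega)
      rw [if_pos ⟨hj, h⟩, if_pos hpe, if_neg (by omega)]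
    · have hpe : j ≠ pair i := fun hc => hj (by
        have := congrArg Fin.val hc
        rw [pair_val_odd i h] at this; omega)
      rw [if_neg (by tauto), if_neg (by omega), if_neg hpe]

lemma symp_mul_symp {m : ℕ} : symp m * symp m = (-1 : Matrix (Fin (2*m)) (Fin (2*m)) ℝ) := by
  ext i j
  rw [Matrix.mul_apply, Finset.sum_eq_single (pair i)]
  · rw [symp_apply i (pair i), if_pos rfl, symp_apply (pair i) j, pair_pair,
      Matrix.neg_apply, Matrix.one_apply]
    have hp := pair_parity i
    by_cases hij : j = i
    · subst hij
      rw [if_pos rfl, if_pos rfl]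
      rcases Nat.mod_two_eq_zero_or_one j.val with h | h <;> rw [h] at hp <;> simp [h, hp]
    · rw [if_neg hij, mul_zero, if_neg (fun hc => hij hc.symm), neg_zero]
  · intro b _ hb
    rw [symp_apply i b, if_neg hb, zero_mul]
  · intro hb; exact absurd (Finset.mem_univ _) hb

lemma symp_transpose {m : ℕ} : (symp m)ᵀ = -(symp m) := by
  ext i j
  rw [Matrix.transpose_apply, Matrix.neg_apply, symp_apply, symp_apply]
  by_cases hij : j = pair i
  · have hji : i = pair j := by rw [hij, pair_pair]
    rw [if_pos hji, if_pos hij]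
    have hp : i.val % 2 = 1 - j.val % 2 := by rw [hji]; exact pair_parity j
    rcases Nat.mod_two_eq_zero_or_one j.val with h | h <;> rw [h] at hp <;> simp [h, hp]
  · have : i ≠ pair j := fun hc => hij (by rw [hc, pair_pair])
    rw [if_neg this, if_neg hij, neg_zero]

end SympAux

namespace SympAux

lemma lambdaBar_mul_lambdaBar {m : ℕ} : lambdaBar m * lambdaBar m = 1 := by
  rw [lambdaBar, Matrix.diagonal_mul_diagonal, ← Matrix.diagonal_one]
  have h : (fun i : Fin (2*m) => (if i.val % 2 = 0 then (1:ℝ) else -1) * (if i.val % 2 = 0 then (1:ℝ) else -1)) = fun _ => (1:ℝ) := by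
    funext i
    split <;> norm_num
  rw [h]


lemma lambdaBar_transpose {m : ℕ} : (lambdaBar m)ᵀ = lambdaBar m :=
  Matrix.diagonal_transpose _

lemma lambdaBar_symp_lambdaBar {m : ℕ} :
    lambdaBar m * symp m * lambdaBar m = -(symp m) := by
  ext i j
  rw [lambdaBar, Matrix.mul_diagonal, Matrix.diagonal_mul, Matrix.neg_apply,
    symp_apply]
  by_cases hij : j = pair i
  · subst hij
    have hp := pair_parity i
    rcases Nat.mod_two_eq_zero_or_one i.val with h | h <;> rw [h] at hp <;>
      simp [h, hp]
  · simp [hij]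

lemma sandwich {m : ℕ} (a : ℝ) (ha : a ≠ 0) (D : Matrix (Fin (2*m)) (Fin (2*m)) ℝ)
    (h : a • symp m * (D * symp m) + D * symp m * (a • symp m) = 0) :
    symp m * D * symp m = D := by
  set σ := symp m
  have e1 : a • σ * (D * σ) = a • (σ * D * σ) := by rw [smul_mul_assoc, Matrix.mul_assoc]
  have e2 : D * σ * (a • σ) = a • (-D) := by
    rw [mul_smul_comm, Matrix.mul_assoc, symp_mul_symp, Matrix.mul_neg, Matrix.mul_one]
  rw [e1, e2, ← smul_add] at h
  have h0 : σ * D * σ + -D = 0 := by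
    rcases smul_eq_zero.mp h with h' | h'
    · exact absurd h' ha
    · exact h'
  have := add_neg_eq_zero.mp h0
  exact this

end SympAux

open SympAux

/-- **Part (b) of the proof of Lemma 1.** If `γ = [[a·I, C],[Cᵀ, a·I]]` with `a > 1` is the
covariance matrix of a pure state, i.e. `(γ·(σ_m ⊕ σ_m))² = -1`, then
(i) `σCᵀσ = Cᵀ`; (ii) `CCᵀ = (a²-1)·I`; (iii) `CσCᵀ = -(a²-1)·σ`; and (iv)
`C = √(a²-1)·O·Λ̄` for some real matrix `O` which is both orthogonal and symplectic. -/
theorem pure_state_offdiagonal_block (m : ℕ) (hm : 1 ≤ m) (a : ℝ) (ha : 1 < a)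
    (C : Matrix (Fin (2 * m)) (Fin (2 * m)) ℝ)
    (hpure : (Matrix.fromBlocks (a • (1 : Matrix (Fin (2 * m)) (Fin (2 * m)) ℝ)) C
        Cᵀ (a • 1) * sympBig m) *
      (Matrix.fromBlocks (a • (1 : Matrix (Fin (2 * m)) (Fin (2 * m)) ℝ)) C
        Cᵀ (a • 1) * sympBig m) = -1) :
    symp m * Cᵀ * symp m = Cᵀ ∧
    C * Cᵀ = (a ^ 2 - 1) • (1 : Matrix (Fin (2 * m)) (Fin (2 * m)) ℝ) ∧
    C * symp m * Cᵀ = -((a ^ 2 - 1) • symp m) ∧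
    ∃ O : Matrix (Fin (2 * m)) (Fin (2 * m)) ℝ,
      O * Oᵀ = 1 ∧ O * symp m * Oᵀ = symp m ∧
      C = Real.sqrt (a ^ 2 - 1) • (O * lambdaBar m) := by
  have ha0 : a ≠ 0 := by positivity
  have ha1 : (0:ℝ) < a ^ 2 - 1 := by nlinarith
  set σ := symp m with hσ
  have hσσ : σ * σ = (-1 : Matrix (Fin (2*m)) (Fin (2*m)) ℝ) := symp_mul_symp
  -- compute the product matrix blockwise
  have hP : Matrix.fromBlocks (a • (1 : Matrix (Fin (2 * m)) (Fin (2 * m)) ℝ)) C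
        Cᵀ (a • 1) * sympBig m
      = Matrix.fromBlocks (a • σ) (C * σ) (Cᵀ * σ) (a • σ) := by
    simp [sympBig, Matrix.fromBlocks_multiply, smul_mul_assoc]
    exact ⟨rfl, rfl, rfl, rfl⟩
  rw [hP, Matrix.fromBlocks_multiply] at hpure
  have hneg : (-1 : Matrix (Fin (2 * m) ⊕ Fin (2 * m)) (Fin (2 * m) ⊕ Fin (2 * m)) ℝ)
      = Matrix.fromBlocks (-1) 0 0 (-1) := by
    rw [← Matrix.fromBlocks_one]
    ext (i | i) (j | j) <;> simp [Matrix.one_apply]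
  rw [hneg] at hpure
  have h11 : a • σ * (a • σ) + C * σ * (Cᵀ * σ) = -1 := by
    simpa using congrArg Matrix.toBlocks₁₁ hpure
  have h21 : Cᵀ * σ * (a • σ) + a • σ * (Cᵀ * σ) = 0 := by
    simpa using congrArg Matrix.toBlocks₂₁ hpure
  -- (i)
  have hi : σ * Cᵀ * σ = Cᵀ := sandwich a ha0 Cᵀ (by rw [add_comm] at h21; exact h21)
  -- key square identity from h11
  have haa : a • σ * (a • σ) = (a * a) • (-1 : Matrix (Fin (2*m)) (Fin (2*m)) ℝ) := by
    rw [smul_mul_assoc, mul_smul_comm, smul_smul, hσσ]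
  rw [haa] at h11
  have hKσ : C * σ * Cᵀ * σ = (a ^ 2 - 1) • (1 : Matrix (Fin (2*m)) (Fin (2*m)) ℝ) := by
    rw [Matrix.mul_assoc]
    calc C * σ * (Cᵀ * σ) = -1 - (a * a) • (-1 : Matrix (Fin (2*m)) (Fin (2*m)) ℝ) :=
          eq_sub_of_add_eq' h11
      _ = (a ^ 2 - 1) • (1 : Matrix (Fin (2*m)) (Fin (2*m)) ℝ) := by
          rw [smul_neg, sub_neg_eq_add, pow_two, sub_smul, one_smul]
          abel
  -- (iii)
  have hiii : C * σ * Cᵀ = -((a ^ 2 - 1) • σ) := by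
    have h1 : C * σ * Cᵀ * (σ * σ) = ((a ^ 2 - 1) • (1 : Matrix (Fin (2*m)) (Fin (2*m)) ℝ)) * σ := by
      rw [← Matrix.mul_assoc, hKσ]
    rw [hσσ, Matrix.mul_neg, Matrix.mul_one, smul_mul_assoc, Matrix.one_mul] at h1
    rw [← h1, neg_neg]
  -- (ii)
  have hanti : σ * Cᵀ = -(Cᵀ * σ) := by
    have h1 : σ * Cᵀ * σ * σ = Cᵀ * σ := by rw [hi]
    rw [Matrix.mul_assoc, hσσ, Matrix.mul_neg, Matrix.mul_one] at h1
    rw [← h1, neg_neg]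
  have hii : C * Cᵀ = (a ^ 2 - 1) • (1 : Matrix (Fin (2*m)) (Fin (2*m)) ℝ) := by
    have h1 : C * σ * Cᵀ = -(C * Cᵀ * σ) := by
      rw [Matrix.mul_assoc, hanti, Matrix.mul_neg, Matrix.mul_assoc]
    have h2 : C * Cᵀ * σ = (a ^ 2 - 1) • σ := neg_injective (h1.symm.trans hiii)
    have h3 : C * Cᵀ * (σ * σ) = ((a ^ 2 - 1) • σ) * σ := by
      rw [← Matrix.mul_assoc, h2]
    rw [hσσ, Matrix.mul_neg, Matrix.mul_one, smul_mul_assoc, hσσ, smul_neg] at h3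
    exact neg_injective h3
  refine ⟨hi, hii, hiii, ?_⟩
  -- (iv)
  set s := Real.sqrt (a ^ 2 - 1) with hs
  have hs0 : s ≠ 0 := ne_of_gt (Real.sqrt_pos.mpr ha1)
  have hss : s * s = a ^ 2 - 1 := Real.mul_self_sqrt ha1.le
  have hscal : s⁻¹ * s⁻¹ * (a ^ 2 - 1) = 1 := by rw [← hss]; field_simp
  have hΛΛ : C * lambdaBar m * (lambdaBar m * Cᵀ) = C * Cᵀ := by
    rw [Matrix.mul_assoc, ← Matrix.mul_assoc (lambdaBar m), lambdaBar_mul_lambdaBar,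
      Matrix.one_mul]
  have hΛσΛ : ∀ X : Matrix (Fin (2*m)) (Fin (2*m)) ℝ,
      lambdaBar m * (σ * (lambdaBar m * X)) = -(σ * X) := by
    intro X
    calc lambdaBar m * (σ * (lambdaBar m * X)) = (lambdaBar m * σ * lambdaBar m) * X := by
          rw [Matrix.mul_assoc, Matrix.mul_assoc]
      _ = -(σ * X) := by rw [lambdaBar_symp_lambdaBar, Matrix.neg_mul]
  refine ⟨s⁻¹ • (C * lambdaBar m), ?_, ?_, ?_⟩
  · rw [Matrix.transpose_smul, Matrix.transpose_mul, lambdaBar_transpose, smul_mul_assoc,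
      mul_smul_comm, smul_smul, hΛΛ, hii, smul_smul, hscal, one_smul]
  · rw [Matrix.transpose_smul, Matrix.transpose_mul, lambdaBar_transpose, smul_mul_assoc,
      smul_mul_assoc, mul_smul_comm, smul_smul]
    have h4 : C * lambdaBar m * σ * (lambdaBar m * Cᵀ) = (a ^ 2 - 1) • σ := by
      rw [Matrix.mul_assoc, Matrix.mul_assoc, hΛσΛ, Matrix.mul_neg, ← Matrix.mul_assoc,
        hiii, neg_neg]
    rw [h4, smul_smul, hscal, one_smul]
  · rw [smul_mul_assoc, Matrix.mul_assoc, lambdaBar_mul_lambdaBar, Matrix.mul_one,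
      smul_smul, mul_inv_cancel₀ hs0, one_smul]
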